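/- Let ℓ ≥ 1. The sum over all arrival sequences of length ℓ with exactly one zero of the resulting right-lane length equals C(ℓ,2) + ℓ if ℓ is odd, and C(ℓ,2) + ℓ/2 + 1 if ℓ is even. -/

import Mathlib

/-- Process an arrival sequence with right-lane count `R` and left-lane count `L`:
`false` (a red car) or a shorter-or-equal right lane sends the car right. -/
def procAux : ℕ → ℕ → List Bool → ℕ × ℕ
  | R, L, [] => (R, L)
  | R, L, bi :: rest =>
    if bi = false ∨ R ≤ L then procAux (R + 1) L rest else procAux R (L + 1) rest

/-- Final (right lane length, left lane length) of an arrival sequence. -/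
def proc (b : List Bool) : ℕ × ℕ := procAux 0 0 b

/-- The final length of the right lane. -/
def rlen (b : List Bool) : ℕ := (proc b).1

/-- Number of bounces: steps where `bᵢ = 1` and the lanes are equal. -/
def bncAux : ℕ → ℕ → List Bool → ℕ
  | _, _, [] => 0
  | R, L, bi :: rest =>
    if bi = true ∧ R = L then 1 + bncAux (R + 1) L rest
    else if bi = false ∨ R ≤ L then bncAux (R + 1) L rest
    else bncAux R (L + 1) rest

def bnc (b : List Bool) : ℕ := bncAux 0 0 b

/-- The parity vector: starts at `0` and toggles just after each bounce. -/
def pvAux : ℕ → ℕ → Bool → List Bool → List Bool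
  | _, _, _, [] => []
  | R, L, p, bi :: rest =>
    let p' := if bi = true ∧ R = L then !p else p
    if bi = false ∨ R ≤ L then p :: pvAux (R + 1) L p' rest
    else p :: pvAux R (L + 1) p' rest

def parityVec (b : List Bool) : List Bool := pvAux 0 0 false b

/-- `φ(b) = b + p(b)` bitwise mod 2. -/
def phi (b : List Bool) : List Bool := List.zipWith xor b (parityVec b)

lemma notcond (R L : ℕ) (h : L < R) : ¬(true = false ∨ R ≤ L) := by
  rintro (h' | h')
  · exact Bool.noConfusion h'
  · omega

lemma balPair : ∀ (n R : ℕ), procAux R R (List.replicate n true) = (R + (n+1)/2, R + n/2)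
  | 0, R => by simp [procAux]
  | 1, R => by simp [procAux]
  | (n+2), R => by
    have h := balPair n (R+1)
    simp only [List.replicate_succ, procAux]
    rw [if_pos (Or.inr le_rfl), if_neg (notcond _ _ (by omega)), h, Prod.mk.injEq]
    omega

lemma bal2 (n R : ℕ) : (procAux (R+1) R (List.replicate n true)).1 = R+1+n/2 := by
  cases n with
  | zero => simp [procAux]
  | succ m =>
    simp only [List.replicate_succ, procAux]
    rw [if_neg (notcond _ _ (by omega)), balPair]

lemma bal3 (n R : ℕ) : (procAux (R+2) R (List.replicate n true)).1 = R+2+(n-1)/2 := by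
  cases n with
  | zero => simp [procAux]
  | succ m =>
    simp only [List.replicate_succ, procAux]
    rw [if_neg (notcond _ _ (by omega))]
    have h := bal2 m (R+1)
    rw [show R+1+1 = R+2 from rfl] at h
    rw [h]; omega

lemma procAux_append : ∀ (l1 : List Bool) (R L : ℕ) (l2 : List Bool),
    procAux R L (l1 ++ l2) = procAux (procAux R L l1).1 (procAux R L l1).2 l2
  | [], R, L, l2 => by simp [procAux]
  | b :: t, R, L, l2 => by
    simp only [List.cons_append, procAux]
    split <;> exact procAux_append t _ _ l2

lemma vval (j m : ℕ) :
    rlen (List.replicate j true ++ false :: List.replicate m true) =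
      if j % 2 = 0 then j/2 + 1 + m/2 else j/2 + 2 + (m-1)/2 := by
  unfold rlen proc
  rw [procAux_append]
  have hb := balPair j 0
  simp only [Nat.zero_add] at hb
  rw [hb]
  simp only [procAux, if_pos (Or.inl rfl)]
  obtain ⟨a, ha⟩ | ⟨a, ha⟩ := Nat.even_or_odd j
  · obtain rfl : j = 2 * a := by omega
    rw [show (2*a+1)/2 = a from by omega, show (2*a)/2 = a from by omega,
      if_pos (show 2*a % 2 = 0 from by omega), if_pos (by simp), bal2]
  · subst ha
    rw [show (2*a+1+1)/2 = a+1 from by omega, show (2*a+1)/2 = a from by omega,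
      if_neg (show ¬(2*a+1) % 2 = 0 from by omega),
      show a+1+1 = a+2 from rfl, if_pos (by simp), bal3]

lemma count_ofFn : ∀ (n : ℕ) (c : Fin n → Bool) (x : Bool),
    (List.ofFn c).count x = (Finset.univ.filter fun i => c i = x).card
  | 0, c, x => by simp
  | (n+1), c, x => by
    rw [List.ofFn_succ, List.count_cons, count_ofFn n]
    rw [Finset.card_filter, Finset.card_filter, Fin.sum_univ_succ]
    simp [beq_iff_eq]
    omega

lemma ofFn_sigma (ℓ : ℕ) (j : Fin ℓ) :
    List.ofFn (fun i : Fin ℓ => decide (i ≠ j)) =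
      List.replicate (j : ℕ) true ++ false :: List.replicate (ℓ - 1 - j) true := by
  have hj := j.isLt
  apply List.ext_getElem
  · simp; omega
  · intro i h1 h2
    simp only [List.getElem_ofFn]
    rcases lt_trichotomy i (j : ℕ) with h | h | h
    · rw [List.getElem_append_left (by simpa using h)]
      simp only [List.getElem_replicate]
      simp [Fin.ext_iff]
      omega
    · rw [List.getElem_append_right (by simp [h])]
      simp [h, Fin.ext_iff]
    · rw [List.getElem_append_right (by simp; omega)]
      rw [List.getElem_cons]
      rw [dif_neg (by simp; omega)]
      simp only [List.getElem_replicate]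
      simp [Fin.ext_iff]
      omega

lemma filter_eq_image (ℓ : ℕ) :
    Finset.univ.filter (fun c : Fin ℓ → Bool => (List.ofFn c).count false = 1) =
      Finset.image (fun j : Fin ℓ => fun i : Fin ℓ => decide (i ≠ j)) Finset.univ := by
  ext c
  simp only [Finset.mem_filter, Finset.mem_univ, true_and, Finset.mem_image]
  rw [count_ofFn]
  constructor
  · intro h
    obtain ⟨j, hj⟩ := Finset.card_eq_one.mp h
    refine ⟨j, ?_⟩
    funext i
    by_cases hij : i = j
    · subst hij
      have : i ∈ Finset.univ.filter fun k => c k = false := by rw [hj]; simp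
      simp at this
      simp [this]
    · have : i ∉ Finset.univ.filter fun k => c k = false := by rw [hj]; simp [hij]
      simp at this
      simp [this, hij]
  · rintro ⟨j, rfl⟩
    have : (Finset.univ.filter fun i : Fin ℓ => (decide (i ≠ j)) = false) = {j} := by
      ext i; simp
    rw [this, Finset.card_singleton]

theorem stmt_18 (ℓ : ℕ) (hℓ : 1 ≤ ℓ) :
    (∑ c ∈ Finset.univ.filter (fun c : Fin ℓ → Bool => (List.ofFn c).count false = 1),
        rlen (List.ofFn c)) =
      if Odd ℓ then Nat.choose ℓ 2 + ℓ else Nat.choose ℓ 2 + ℓ / 2 + 1 := by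
  rw [filter_eq_image]
  rw [Finset.sum_image (by
    intro a _ b _ hab
    have := congrFun hab a
    simp at this
    exact this)]
  have key : ∀ j : Fin ℓ, rlen (List.ofFn fun i : Fin ℓ => decide (i ≠ j)) =
      if ℓ % 2 = 1 then (ℓ+1)/2 else (if (j : ℕ) = ℓ-1 then ℓ/2+1 else ℓ/2) := by
    intro j
    have hj := j.isLt
    rw [ofFn_sigma, vval]
    rcases Nat.even_or_odd (j : ℕ) with ⟨a, ha⟩ | ⟨a, ha⟩
    · rw [if_pos (by omega)]
      split_ifs <;> omega
    · rw [if_neg (by omega)]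
      split_ifs <;> omega
  rw [Finset.sum_congr rfl (fun j _ => key j)]
  rw [Fin.sum_univ_eq_sum_range
    (fun j => if ℓ % 2 = 1 then (ℓ+1)/2 else if j = ℓ-1 then ℓ/2+1 else ℓ/2),
    Nat.choose_two_right]
  by_cases hodd : Odd ℓ
  · rw [if_pos hodd]
    obtain ⟨k, rfl⟩ := hodd
    rw [Finset.sum_congr rfl (fun j _ => by rw [if_pos (by omega)])]
    rw [Finset.sum_const, Finset.card_range, smul_eq_mul]
    rw [show (2*k+1+1)/2 = k+1 from by omega,
      show (2*k+1) - 1 = 2*k from by omega,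
      show (2*k+1)*(2*k) = 2*((2*k+1)*k) from by ring,
      Nat.mul_div_cancel_left _ (by norm_num)]
    ring
  · rw [if_neg hodd]
    have : ∃ k, ℓ = 2*k+2 := by
      rcases Nat.even_or_odd ℓ with ⟨k, hk⟩ | h
      · exact ⟨k - 1, by omega⟩
      · exact absurd h hodd
    obtain ⟨k, rfl⟩ := this
    rw [Finset.sum_congr rfl (fun j hj => by
      rw [if_neg (by omega)])]
    rw [show 2*k+2 = (2*k+1)+1 from rfl, Finset.sum_range_succ]
    rw [Finset.sum_congr rfl (fun j hj => by
      rw [if_neg (by simp at hj; omega)])]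
    rw [if_pos (by omega)]
    rw [Finset.sum_const, Finset.card_range, smul_eq_mul]
    rw [show (2*k+1+1)/2 = k+1 from by omega,
      show (2*k+2) - 1 = 2*k+1 from by omega,
      show (2*k+2)*(2*k+1) = 2*((k+1)*(2*k+1)) from by ring,
      Nat.mul_div_cancel_left _ (by norm_num)]
    ring
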